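/- Fix n ≥ 2 and p ∈ [0, 1/(n−1)], and let states be {1, …, n} with the usual order. Define the row-stochastic matrices P₀ and P₁ by: P₀(1,1) = 1; for x ≥ 2, P₀(x, 1) = 1 − (n−1)p, P₀(x, y) = p for 2 ≤ y ≤ x−1, and P₀(x, x) = (n−x+1)p, all other entries 0; and P₁(x, x) = (n−x)p and P₁(x, n) = 1 − (n−x)p for every x (so P₁(n, n) = 1), all other entries 0. For a ∈ {0,1}, define q_a(x' | x) := ∑_{z ≥ x'} P_a(x, z). Then: (i) both P₀ and P₁ have nonnegative entries and rows summing to 1; (ii) for each x' and each a, q_a(x' | x) is nondecreasing in x; (iii) for each x and x', q₁(x' | x) ≥ q₀(x' | x); and (iv) for each x', q is superadditive on {1,…,n} × {0,1}, i.e., for x₁ ≥ x₂, q₁(x' | x₁) + q₀(x' | x₂) ≥ q₀(x' | x₁) + q₁(x' | x₂). -/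
import Mathlib


open Finset

/-- Tail function `q(x' | x) = ∑_{z ≥ x'} P(x, z)` of a transition matrix. -/
noncomputable def tailFun {n : ℕ} (P : Fin n → Fin n → ℝ) (x' x : Fin n) : ℝ :=
  ∑ z ∈ Finset.univ.filter (fun z => x' ≤ z), P x z

/-- Model 4, passive action (states `{1,…,n}` encoded as `Fin n`, state `x`
corresponding to index `x−1`): state 1 is absorbing; a state `x ≥ 2` resets to
state 1 with probability `1 − (n−1)p`, moves to each state `2 ≤ y ≤ x−1` with
probability `p`, and stays put with probability `(n−x+1)p`. -/
noncomputable def model4P0 (n : ℕ) (p : ℝ) : Fin n → Fin n → ℝ := fun x y =>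
  if x.val = 0 then (if y.val = 0 then 1 else 0)
  else if y.val = 0 then 1 - ((n : ℝ) - 1) * p
  else if y.val < x.val then p
  else if y = x then ((n : ℝ) - x.val) * p
  else 0

/-- Model 4, active (maintenance) action: state `x` stays put with probability
`(n−x)p` and jumps to the best state `n` with probability `1 − (n−x)p`
(so state `n` is absorbing). -/
noncomputable def model4P1 (n : ℕ) (p : ℝ) : Fin n → Fin n → ℝ := fun x y =>
  (if y = x then ((n : ℝ) - 1 - x.val) * p else 0)
    + (if y.val = n - 1 then 1 - ((n : ℝ) - 1 - x.val) * p else 0)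

set_option maxRecDepth 8000

section aux

variable {n : ℕ} {p : ℝ}

lemma auxFilterIci (x' : Fin n) :
    Finset.univ.filter (fun z => x' ≤ z) = Finset.Ici x' := by
  ext z; simp

lemma auxP0decomp (hn : 2 ≤ n) (x z : Fin n) (hx : x.val ≠ 0) :
    model4P0 n p x z = (if z = (⟨0, by omega⟩ : Fin n) then 1 - ((n : ℝ) - 1) * p else 0)
      + (if 0 < z.val ∧ z.val < x.val then p else 0)
      + (if z = x then ((n : ℝ) - x.val) * p else 0) := by
  unfold model4P0
  have h00 : ((⟨0, by omega⟩ : Fin n) : ℕ) = 0 := rfl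
  have hz0 : (z = (⟨0, by omega⟩ : Fin n)) ↔ z.val = 0 := by
    rw [Fin.ext_iff, h00]
  have hzx : (z = x) ↔ z.val = x.val := Fin.ext_iff
  by_cases h0 : z.val = 0 <;> by_cases hlt : z.val < x.val <;> by_cases he : z.val = x.val <;>
    simp [hx, h0, hlt, he, hz0, hzx] <;>
    first
      | omega
      | rw [if_pos (Nat.pos_of_ne_zero h0)]

lemma auxSumP0 (hn : 2 ≤ n) (x : Fin n) (hx : x.val ≠ 0) (s : Finset (Fin n)) :
    ∑ z ∈ s, model4P0 n p x z
      = (if (⟨0, by omega⟩ : Fin n) ∈ s then 1 - ((n : ℝ) - 1) * p else 0)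
        + p * (s.filter (fun z => 0 < z.val ∧ z.val < x.val)).card
        + (if x ∈ s then ((n : ℝ) - x.val) * p else 0) := by
  simp_rw [auxP0decomp hn x _ hx, Finset.sum_add_distrib]
  congr 1
  · congr 1
    · exact Finset.sum_ite_eq' s _ _
    · rw [← Finset.sum_filter, Finset.sum_const, nsmul_eq_mul, mul_comm]
  · exact Finset.sum_ite_eq' s _ _

lemma tail0_eq (hn : 2 ≤ n) (x' x : Fin n) :
    tailFun (model4P0 n p) x' x =
      if x'.val = 0 then 1 else if x' ≤ x then ((n : ℝ) - x'.val) * p else 0 := by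
  unfold tailFun
  rw [auxFilterIci]
  by_cases hx : x.val = 0
  · have hrow : ∀ z : Fin n, model4P0 n p x z = if z = x then 1 else 0 := by
      intro z
      by_cases h : z = x
      · simp [model4P0, h, hx]
      · have hz : z.val ≠ 0 := fun h0 => h (Fin.ext (h0.trans hx.symm))
        simp [model4P0, h, hz, hx]
    simp_rw [hrow]
    rw [Finset.sum_ite_eq' _ _ (fun _ => (1 : ℝ))]
    simp only [Finset.mem_Ici]
    by_cases hle : x' ≤ x
    · have hx'0 : x'.val = 0 := by rw [Fin.le_def] at hle; omega
      rw [if_pos hle, if_pos hx'0]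
    · have hx'0 : ¬ x'.val = 0 := by rw [Fin.le_def] at hle; omega
      rw [if_neg hle, if_neg hx'0, if_neg hle]
  · rw [auxSumP0 hn x hx]
    have h00 : ((⟨0, by omega⟩ : Fin n) : ℕ) = 0 := rfl
    by_cases hx' : x'.val = 0
    · have h0 : (⟨0, by omega⟩ : Fin n) ∈ Finset.Ici x' := by
        rw [Finset.mem_Ici, Fin.le_def, h00]; omega
      have hxm : x ∈ Finset.Ici x' := by
        rw [Finset.mem_Ici, Fin.le_def]; omega
      have hfilter : (Finset.Ici x').filter (fun z => 0 < z.val ∧ z.val < x.val)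
          = Finset.Ioo (⟨0, by omega⟩ : Fin n) x := by
        ext z
        simp only [Finset.mem_filter, Finset.mem_Ici, Finset.mem_Ioo, Fin.le_def, Fin.lt_def, h00]
        omega
      rw [hfilter, Fin.card_Ioo, if_pos h0, if_pos hxm, if_pos hx', h00]
      have hc : ((x.val - 0 - 1 : ℕ) : ℝ) = (x.val : ℝ) - 1 := by
        rw [Nat.sub_zero, Nat.cast_sub (by omega)]
        push_cast; ring
      rw [hc]
      ring
    · have h0 : (⟨0, by omega⟩ : Fin n) ∉ Finset.Ici x' := by
        rw [Finset.mem_Ici, Fin.le_def, h00]; omega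
      have hfilter : (Finset.Ici x').filter (fun z => 0 < z.val ∧ z.val < x.val)
          = Finset.Ico x' x := by
        ext z
        simp only [Finset.mem_filter, Finset.mem_Ici, Finset.mem_Ico, Fin.le_def, Fin.lt_def]
        omega
      rw [hfilter, Fin.card_Ico, if_neg h0, if_neg hx']
      by_cases hle : x' ≤ x
      · have hxm : x ∈ Finset.Ici x' := Finset.mem_Ici.mpr hle
        have hc : ((x.val - x'.val : ℕ) : ℝ) = (x.val : ℝ) - x'.val :=
          Nat.cast_sub hle
        rw [if_pos hxm, if_pos hle, hc]
        ring
      · have hxm : x ∉ Finset.Ici x' := fun h => hle (Finset.mem_Ici.mp h)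
        have hlt : x.val < x'.val := by rw [Fin.le_def] at hle; omega
        have hz : x.val - x'.val = 0 := by omega
        rw [if_neg hxm, if_neg hle, hz]
        simp

lemma tail1_eq (hn : 2 ≤ n) (x' x : Fin n) :
    tailFun (model4P1 n p) x' x =
      if x' ≤ x then 1 else 1 - ((n : ℝ) - 1 - x.val) * p := by
  unfold tailFun model4P1
  rw [auxFilterIci, Finset.sum_add_distrib]
  have h00 : ((⟨n - 1, by omega⟩ : Fin n) : ℕ) = n - 1 := rfl
  have h2 : ∀ z : Fin n, (z.val = n - 1) = (z = (⟨n - 1, by omega⟩ : Fin n)) := by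
    intro z; rw [eq_iff_iff, Fin.ext_iff, h00]
  simp_rw [h2]
  rw [Finset.sum_ite_eq' _ _ (fun _ => ((n : ℝ) - 1 - x.val) * p),
    Finset.sum_ite_eq' _ _ (fun _ => 1 - ((n : ℝ) - 1 - x.val) * p)]
  have hlast : (⟨n - 1, by omega⟩ : Fin n) ∈ Finset.Ici x' := by
    rw [Finset.mem_Ici, Fin.le_def, h00]
    omega
  rw [if_pos hlast]
  by_cases hle : x' ≤ x
  · rw [if_pos (Finset.mem_Ici.mpr hle), if_pos hle]
    ring
  · rw [if_neg (fun h => hle (Finset.mem_Ici.mp h)), if_neg hle]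
    ring

end aux

/-- Model 4 of the appendix (machine maintenance) satisfies: (i) both matrices
are row-stochastic; (ii) the tail `q_a(x' | ·)` is nondecreasing in the state
for each action; (iii) the tail is nondecreasing in the action; (iv) the tail
is superadditive on state × action. -/
theorem model4_tail_conditions (n : ℕ) (hn : 2 ≤ n) (p : ℝ)
    (hp0 : 0 ≤ p) (hp1 : p ≤ 1 / ((n : ℝ) - 1)) :
    ((∀ x y : Fin n, 0 ≤ model4P0 n p x y) ∧ (∀ x : Fin n, ∑ y, model4P0 n p x y = 1)
      ∧ (∀ x y : Fin n, 0 ≤ model4P1 n p x y) ∧ (∀ x : Fin n, ∑ y, model4P1 n p x y = 1))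
    ∧ (∀ x' : Fin n, Monotone (tailFun (model4P0 n p) x')
        ∧ Monotone (tailFun (model4P1 n p) x'))
    ∧ (∀ x' x : Fin n,
        tailFun (model4P0 n p) x' x ≤ tailFun (model4P1 n p) x' x)
    ∧ (∀ x' x₁ x₂ : Fin n, x₂ ≤ x₁ →
        tailFun (model4P0 n p) x' x₁ + tailFun (model4P1 n p) x' x₂
          ≤ tailFun (model4P1 n p) x' x₁ + tailFun (model4P0 n p) x' x₂) := by
  -- basic numeric facts
  have hn2 : (2 : ℝ) ≤ (n : ℝ) := by exact_mod_cast hn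
  have hNpos : (0 : ℝ) < (n : ℝ) - 1 := by linarith
  have hNp : ((n : ℝ) - 1) * p ≤ 1 := by
    have := (le_div_iff₀ hNpos).mp hp1
    linarith
  have hval : ∀ x : Fin n, (x.val : ℝ) + 1 ≤ (n : ℝ) := by
    intro x; exact_mod_cast x.isLt
  -- tail formulas, abbreviated
  have T0 := fun x' x => tail0_eq (p := p) hn x' x
  have T1 := fun x' x => tail1_eq (p := p) hn x' x
  -- the universal filter
  refine ⟨⟨?_, ?_, ?_, ?_⟩, ?_, ?_, ?_⟩
  · -- P0 entries nonneg
    intro x y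
    have hy := hval y
    have hx := hval x
    unfold model4P0
    split_ifs with h1 h2 h3 h4 h5
    · norm_num
    · norm_num
    · linarith
    · exact hp0
    · apply mul_nonneg _ hp0
      linarith
    · norm_num
  · -- P0 rows sum to 1
    intro x
    have huniv : Finset.univ.filter (fun z => (⟨0, by omega⟩ : Fin n) ≤ z) = Finset.univ := by
      apply Finset.filter_true_of_mem
      intro z _
      rw [Fin.le_def]
      exact Nat.zero_le _
    have := T0 (⟨0, by omega⟩ : Fin n) x
    rw [tailFun, huniv] at this
    simpa using this
  · -- P1 entries nonneg
    intro x y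
    have hx := hval x
    have hle : ((n : ℝ) - 1 - x.val) * p ≤ 1 := by
      have : ((n : ℝ) - 1 - x.val) * p ≤ ((n : ℝ) - 1) * p := by
        apply mul_le_mul_of_nonneg_right _ hp0
        linarith
      linarith
    have hge : 0 ≤ ((n : ℝ) - 1 - x.val) * p := by
      apply mul_nonneg _ hp0
      linarith
    unfold model4P1
    split_ifs <;> simp <;> linarith
  · -- P1 rows sum to 1
    intro x
    have huniv : Finset.univ.filter (fun z => (⟨0, by omega⟩ : Fin n) ≤ z) = Finset.univ := by
      apply Finset.filter_true_of_mem
      intro z _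
      rw [Fin.le_def]
      exact Nat.zero_le _
    have h0x : (⟨0, by omega⟩ : Fin n) ≤ x := by
      rw [Fin.le_def]; exact Nat.zero_le _
    have := T1 (⟨0, by omega⟩ : Fin n) x
    rw [tailFun, huniv, if_pos h0x] at this
    simpa using this
  · -- monotonicity in the state
    intro x'
    constructor
    · intro a b hab
      rw [T0, T0]
      by_cases hx' : x'.val = 0
      · simp [hx']
      · rw [if_neg hx', if_neg hx']
        have hnn : 0 ≤ ((n : ℝ) - x'.val) * p := by
          have := hval x'
          apply mul_nonneg _ hp0
          linarith
        by_cases ha : x' ≤ a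
        · rw [if_pos ha, if_pos (ha.trans hab)]
        · rw [if_neg ha]
          split_ifs <;> linarith
    · intro a b hab
      rw [T1, T1]
      have hmab : ((n : ℝ) - 1 - b.val) * p ≤ ((n : ℝ) - 1 - a.val) * p := by
        apply mul_le_mul_of_nonneg_right _ hp0
        have : (a.val : ℝ) ≤ (b.val : ℝ) := by exact_mod_cast hab
        linarith
      have hganb : 0 ≤ ((n : ℝ) - 1 - b.val) * p := by
        have := hval b
        apply mul_nonneg _ hp0
        linarith
      by_cases ha : x' ≤ a
      · rw [if_pos ha, if_pos (ha.trans hab)]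
      · rw [if_neg ha]
        split_ifs <;> linarith
  · -- action monotonicity
    intro x' x
    rw [T0, T1]
    have hx := hval x
    have hx' := hval x'
    have hge : 0 ≤ ((n : ℝ) - 1 - x.val) * p := by
      apply mul_nonneg _ hp0
      linarith
    have hle1 : ((n : ℝ) - 1 - x.val) * p ≤ 1 := by
      have : ((n : ℝ) - 1 - x.val) * p ≤ ((n : ℝ) - 1) * p := by
        apply mul_le_mul_of_nonneg_right _ hp0
        linarith
      linarith
    by_cases hx'0 : x'.val = 0
    · have : x' ≤ x := by rw [Fin.le_def]; omega
      rw [if_pos hx'0, if_pos this]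
    · rw [if_neg hx'0]
      have h1x' : (1 : ℝ) ≤ (x'.val : ℝ) := by
        have : 1 ≤ x'.val := Nat.one_le_iff_ne_zero.mpr hx'0
        exact_mod_cast this
      have hle2 : ((n : ℝ) - x'.val) * p ≤ 1 := by
        have : ((n : ℝ) - x'.val) * p ≤ ((n : ℝ) - 1) * p := by
          apply mul_le_mul_of_nonneg_right _ hp0
          linarith
        linarith
      split_ifs <;> linarith
  · -- superadditivity
    intro x' x₁ x₂ h21
    rw [T0, T0, T1, T1]
    have hx1 := hval x₁
    have hx2 := hval x₂
    have hx' := hval x'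
    by_cases hx'0 : x'.val = 0
    · have h1 : x' ≤ x₁ := by rw [Fin.le_def]; omega
      have h2 : x' ≤ x₂ := by rw [Fin.le_def]; omega
      rw [if_pos hx'0, if_pos hx'0, if_pos h1, if_pos h2]
    · rw [if_neg hx'0, if_neg hx'0]
      by_cases h2 : x' ≤ x₂
      · have h1 : x' ≤ x₁ := h2.trans h21
        rw [if_pos h1, if_pos h2, if_pos h1, if_pos h2]
        ring_nf
        linarith
      · rw [if_neg h2, if_neg h2]
        by_cases h1 : x' ≤ x₁
        · rw [if_pos h1, if_pos h1]
          have hlt : x₂.val < x'.val := by rw [Fin.le_def] at h2; omega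
          have hcast : (x₂.val : ℝ) + 1 ≤ (x'.val : ℝ) := by exact_mod_cast hlt
          have key : ((n : ℝ) - x'.val) * p ≤ ((n : ℝ) - 1 - x₂.val) * p := by
            apply mul_le_mul_of_nonneg_right _ hp0
            linarith
          linarith
        · rw [if_neg h1, if_neg h1]
          have hmab : ((n : ℝ) - 1 - x₁.val) * p ≤ ((n : ℝ) - 1 - x₂.val) * p := by
            apply mul_le_mul_of_nonneg_right _ hp0
            have : (x₂.val : ℝ) ≤ (x₁.val : ℝ) := by exact_mod_cast h21
            linarith
          linarith
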